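/- Let k ≥ 6 be even and n = 2k. Define S_i = [i, i+k−2] for 1 ≤ i ≤ k/2 and S_i = [k/2+i, 3k/2+i−2] mod⁺ n for k/2+1 ≤ i ≤ k, and for n distinct elements a_1,…,a_n of a field F let P_{S_i}(x) = ∏_{j∈S_i}(x − a_j). Then P_{S_1},…,P_{S_k} are linearly independent over F. -/

import Mathlib

open Polynomial

/-- `a mod⁺ n`: the unique representative of `a` modulo `n` in `{1, …, n}`. -/
def modp (n a : ℕ) : ℕ := (a - 1) % n + 1

/-- Construction 1: the set system for `n = 2k`. -/
def con1 (k i : ℕ) : Finset ℕ :=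
  if i ≤ k / 2 then Finset.Icc i (i + k - 2)
  else (Finset.Icc (k / 2 + i) (3 * k / 2 + i - 2)).image (modp (2 * k))

lemma mem_con1_le (k m s : ℕ) (hm : k = 2*m) (hs : s ≤ m) (j : ℕ) :
    j ∈ con1 k s ↔ s ≤ j ∧ j ≤ s + 2*m - 2 := by
  subst hm
  have h2 : 2*m/2 = m := by omega
  rw [con1, h2, if_pos hs, Finset.mem_Icc]

lemma mem_con1_gt (k m s : ℕ) (hm : k = 2*m) (hm1 : 1 ≤ m) (hs : m < s) (hsk : s ≤ 2*m)
    (j : ℕ) :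
    j ∈ con1 k s ↔ (m + s ≤ j ∧ j ≤ 3*m + s - 2 ∧ j ≤ 4*m) ∨
      (1 ≤ j ∧ j + 4*m + 2 ≤ 3*m + s) := by
  subst hm
  have h2 : 2*m/2 = m := by omega
  have h3 : 3*(2*m)/2 = 3*m := by omega
  rw [con1, h2, h3, if_neg (by omega)]
  simp only [Finset.mem_image, Finset.mem_Icc, modp]
  constructor
  · rintro ⟨b, ⟨hb1, hb2⟩, rfl⟩
    by_cases hb : b ≤ 4*m
    · rw [Nat.mod_eq_of_lt (by omega)]
      omega
    · rw [Nat.mod_eq_sub_mod (by omega), Nat.mod_eq_of_lt (by omega)]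
      omega
  · rintro (⟨h1, h2', h3'⟩ | ⟨h1, h2'⟩)
    · exact ⟨j, ⟨by omega, by omega⟩, by rw [Nat.mod_eq_of_lt (by omega)]; omega⟩
    · exact ⟨j + 4*m, ⟨by omega, by omega⟩,
        by rw [Nat.mod_eq_sub_mod (by omega), Nat.mod_eq_of_lt (by omega)]; omega⟩

lemma con1_subset (k m s : ℕ) (hm : k = 2*m) (hm1 : 1 ≤ m) (hs1 : 1 ≤ s) (hsk : s ≤ 2*m) :
    con1 k s ⊆ Finset.Icc 1 (4*m) := by
  intro j hj
  rcases le_or_gt s m with h | h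
  · rw [mem_con1_le k m s hm h] at hj
    rw [Finset.mem_Icc]; omega
  · rw [mem_con1_gt k m s hm hm1 h hsk] at hj
    rw [Finset.mem_Icc]; omega

lemma con1_card_le (k m s : ℕ) (hm : k = 2*m) (hm1 : 1 ≤ m) :
    (con1 k s).card ≤ 2*m - 1 := by
  subst hm
  have h2 : 2*m/2 = m := by omega
  have h3 : 3*(2*m)/2 = 3*m := by omega
  rw [con1, h2, h3]
  split_ifs with h
  · rw [Nat.card_Icc]; omega
  · exact le_trans Finset.card_image_le (by rw [Nat.card_Icc]; omega)

section evals
variable {F : Type*} [Field F]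

lemma eval_prod_eq_zero (a : ℕ → F) (S : Finset ℕ) (j : ℕ) (hjS : j ∈ S) :
    Polynomial.eval (a j) (∏ l ∈ S, (X - C (a l))) = 0 := by
  rw [Polynomial.eval_prod]
  exact Finset.prod_eq_zero hjS (by simp)

lemma eval_prod_ne_zero (a : ℕ → F) (m : ℕ) (ha : Set.InjOn a (Set.Icc 1 (4*m)))
    (S : Finset ℕ) (hS : S ⊆ Finset.Icc 1 (4*m)) (j : ℕ) (hj1 : 1 ≤ j) (hj2 : j ≤ 4*m)
    (hjS : j ∉ S) : Polynomial.eval (a j) (∏ l ∈ S, (X - C (a l))) ≠ 0 := by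
  rw [Polynomial.eval_prod, Finset.prod_ne_zero_iff]
  intro l hl
  simp only [Polynomial.eval_sub, Polynomial.eval_X, Polynomial.eval_C, sub_ne_zero]
  intro hal
  have hl' := hS hl
  rw [Finset.mem_Icc] at hl'
  have : j = l := ha (Set.mem_Icc.mpr ⟨hj1, hj2⟩) (Set.mem_Icc.mpr ⟨hl'.1, hl'.2⟩) hal
  exact hjS (this ▸ hl)

end evals

theorem stmt_16 {F : Type*} [Field F] (k : ℕ) (hk : 6 ≤ k) (hke : Even k)
    (a : ℕ → F) (ha : Set.InjOn a (Set.Icc 1 (2 * k))) :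
    LinearIndependent F (fun i : Fin k => ∏ j ∈ con1 k ((i : ℕ) + 1), (X - C (a j))) := by
  classical
  obtain ⟨m, hm'⟩ := hke
  have hm : k = 2*m := by omega
  have hm3 : 3 ≤ m := by omega
  have ha4 : Set.InjOn a (Set.Icc 1 (4*m)) := by
    have : (2*k) = 4*m := by omega
    rwa [this] at ha
  rw [Fintype.linearIndependent_iff]
  intro g hg
  set v : Fin k → F[X] := fun i => ∏ j ∈ con1 k ((i : ℕ) + 1), (X - C (a j)) with hv
  -- basic facts about each index
  have hi_le : ∀ i : Fin k, (i : ℕ) + 1 ≤ 2*m := fun i => by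
    have := i.isLt; omega
  -- split the sum into the two families
  set A : Finset (Fin k) := Finset.univ.filter (fun i => (i : ℕ) + 1 ≤ m) with hA
  set B : Finset (Fin k) := Finset.univ.filter (fun i => ¬ ((i : ℕ) + 1 ≤ m)) with hB
  have hsplit : (∑ i ∈ A, g i • v i) + (∑ i ∈ B, g i • v i) = 0 := by
    rw [hA, hB, Finset.sum_filter_add_sum_filter_not]
    exact hg
  set P : F[X] := ∑ i ∈ A, g i • v i with hP
  have hPQ : P = - ∑ i ∈ B, g i • v i := by
    rw [hP]; linear_combination (norm := ring_nf) hsplit - hP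
  -- Step 1: P = 0
  have hP0 : P = 0 := by
    apply Polynomial.eq_zero_of_natDegree_lt_card_of_eval_eq_zero' P
      (((Finset.Icc m (2*m-1)) ∪ (Finset.Icc (3*m) (4*m-1))).image a)
    · intro x hx
      obtain ⟨j, hj, rfl⟩ := Finset.mem_image.mp hx
      rw [Finset.mem_union, Finset.mem_Icc, Finset.mem_Icc] at hj
      rcases hj with hj | hj
      · -- a j is a root of every polynomial in family 1
        rw [hP, Polynomial.eval_finset_sum]
        apply Finset.sum_eq_zero
        intro i hiA
        rw [hA, Finset.mem_filter] at hiA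
        rw [Polynomial.smul_eq_C_mul, Polynomial.eval_mul]
        rw [hv]
        rw [eval_prod_eq_zero a _ j ?_, mul_zero]
        rw [mem_con1_le k m _ hm hiA.2]
        omega
      · -- a j is a root of every polynomial in family 2
        rw [hPQ, Polynomial.eval_neg, Polynomial.eval_finset_sum]
        rw [neg_eq_zero]
        apply Finset.sum_eq_zero
        intro i hiB
        rw [hB, Finset.mem_filter] at hiB
        rw [Polynomial.smul_eq_C_mul, Polynomial.eval_mul]
        rw [hv]
        rw [eval_prod_eq_zero a _ j ?_, mul_zero]
        rw [mem_con1_gt k m _ hm (by omega) (by omega) (hi_le i)]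
        left; omega
    · -- degree bound
      have hcard : (((Finset.Icc m (2*m-1)) ∪ (Finset.Icc (3*m) (4*m-1))).image a).card = 2*m := by
        rw [Finset.card_image_of_injOn, Finset.card_union_of_disjoint, Nat.card_Icc,
          Nat.card_Icc]
        · omega
        · rw [Finset.disjoint_left]
          intro x hx hx'
          rw [Finset.mem_Icc] at hx hx'
          omega
        · apply Set.InjOn.mono _ ha4
          intro x hx
          simp only [Finset.coe_union, Finset.coe_Icc, Set.mem_union, Set.mem_Icc] at hx
          rw [Set.mem_Icc]
          omega
      rw [hcard]
      have : P.natDegree ≤ 2*m - 1 := by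
        apply Polynomial.natDegree_sum_le_of_forall_le
        intro i hi
        refine le_trans (Polynomial.natDegree_smul_le _ _) ?_
        rw [hv]
        refine le_trans (Polynomial.natDegree_prod_le _ _) ?_
        calc ∑ j ∈ con1 k ((i : ℕ) + 1), (X - C (a j)).natDegree
            = (con1 k ((i : ℕ) + 1)).card := by
              simp [Polynomial.natDegree_X_sub_C]
          _ ≤ 2*m - 1 := con1_card_le k m _ hm (by omega)
      omega
  have hQ0 : (∑ i ∈ B, g i • v i) = 0 := by
    have := hPQ.symm.trans hP0
    simpa using this
  -- family 1: upward induction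
  have key1 : ∀ N : ℕ, ∀ i : Fin k, (i : ℕ) = N → (i : ℕ) + 1 ≤ m → g i = 0 := by
    intro N
    induction N using Nat.strong_induction_on with
    | _ N IH =>
      intro i hiN hiA
      have hpt1 : 1 ≤ 2*m + N := by omega
      have hpt2 : 2*m + N ≤ 4*m := by omega
      have he : ∑ i' ∈ A, g i' * Polynomial.eval (a (2*m + N)) (v i') = 0 := by
        have := congrArg (Polynomial.eval (a (2*m + N))) hP0
        rw [hP, Polynomial.eval_finset_sum, Polynomial.eval_zero] at this
        simpa only [Polynomial.smul_eq_C_mul, Polynomial.eval_mul, Polynomial.eval_C] using this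
      rw [Finset.sum_eq_single i] at he
      · have hne : Polynomial.eval (a (2*m + N)) (v i) ≠ 0 := by
          rw [hv]
          apply eval_prod_ne_zero a m ha4 _ (con1_subset k m _ hm (by omega) (by omega) (hi_le i))
            _ hpt1 hpt2
          rw [mem_con1_le k m _ hm hiA]
          omega
        exact (mul_eq_zero.mp he).resolve_right hne
      · intro b hbA hbi
        rw [hA, Finset.mem_filter] at hbA
        have hbv : (b : ℕ) ≠ N := by
          intro hb
          exact hbi (Fin.ext (by omega))
        rcases lt_or_gt_of_ne hbv with hlt | hgt
        · rw [IH (b : ℕ) hlt b rfl hbA.2, zero_mul]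
        · rw [hv]
          rw [eval_prod_eq_zero a _ _ ?_, mul_zero]
          rw [mem_con1_le k m _ hm hbA.2]
          omega
      · intro hiA'
        exact absurd (by rw [hA, Finset.mem_filter]; exact ⟨Finset.mem_univ i, hiA⟩) hiA'
  -- family 2: downward induction
  have key2 : ∀ N : ℕ, ∀ i : Fin k, (i : ℕ) + N = 2*m - 1 → m < (i : ℕ) + 1 → g i = 0 := by
    intro N
    induction N using Nat.strong_induction_on with
    | _ N IH =>
      intro i hiN hiB
      have hik : (i : ℕ) < 2*m := by have := i.isLt; omega
      have hpt1 : 1 ≤ m + (i : ℕ) := by omega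
      have hpt2 : m + (i : ℕ) ≤ 4*m := by omega
      have he : ∑ i' ∈ B, g i' * Polynomial.eval (a (m + (i : ℕ))) (v i') = 0 := by
        have := congrArg (Polynomial.eval (a (m + (i : ℕ)))) hQ0
        rw [Polynomial.eval_finset_sum, Polynomial.eval_zero] at this
        simpa only [Polynomial.smul_eq_C_mul, Polynomial.eval_mul, Polynomial.eval_C] using this
      rw [Finset.sum_eq_single i] at he
      · have hne : Polynomial.eval (a (m + (i : ℕ))) (v i) ≠ 0 := by
          rw [hv]
          apply eval_prod_ne_zero a m ha4 _ (con1_subset k m _ hm (by omega) (by omega) (hi_le i))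
            _ hpt1 hpt2
          rw [mem_con1_gt k m _ hm (by omega) (by omega) (hi_le i)]
          omega
        exact (mul_eq_zero.mp he).resolve_right hne
      · intro b hbB hbi
        rw [hB, Finset.mem_filter] at hbB
        have hbm : m < (b : ℕ) + 1 := by omega
        have hbk : (b : ℕ) < 2*m := by have := b.isLt; omega
        have hbv : (b : ℕ) ≠ (i : ℕ) := by
          intro hb
          exact hbi (Fin.ext hb)
        rcases lt_or_gt_of_ne hbv with hlt | hgt
        · -- b < i : a (m+i) is a root of v b
          rw [hv]
          rw [eval_prod_eq_zero a _ _ ?_, mul_zero]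
          rw [mem_con1_gt k m _ hm (by omega) (by omega) (hi_le b)]
          left; omega
        · -- b > i : g b = 0 by IH
          rw [IH (2*m - 1 - (b : ℕ)) (by omega) b (by omega) hbm, zero_mul]
      · intro hiB'
        exact absurd (by rw [hB, Finset.mem_filter]; exact ⟨Finset.mem_univ i, by omega⟩) hiB'
  intro i
  by_cases hi : (i : ℕ) + 1 ≤ m
  · exact key1 (i : ℕ) i rfl hi
  · exact key2 (2*m - 1 - (i : ℕ)) i (by have := i.isLt; omega) (by omega)
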